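/- The ratio α(Sh_n^2)/|V(Sh_n^2)| tends to 1/2 as n tends to infinity; that is, lim_{n→∞} α(Sh_n^2)/C(n,2) = 1/2, where C(n,2) = n(n−1)/2. -/

import Mathlib

/-- Two vertices `(i,j)` and `(i',j')` of the shift graph are adjacent
if `j = i'` or `j' = i` (and they are distinct). -/
abbrev shAdj (p q : ℕ × ℕ) : Prop := p ≠ q ∧ (p.2 = q.1 ∨ q.2 = p.1)

/-- The vertex set of the shift graph `Sh_n^2`: all pairs `(i,j)` with `1 ≤ i < j ≤ n`. -/
def shiftVerts (n : ℕ) : Finset (ℕ × ℕ) :=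
  (Finset.Icc 1 n ×ˢ Finset.Icc 1 n).filter fun p => p.1 < p.2

open Classical in
/-- The independence number of the subgraph of the shift graph induced on `G`. -/
noncomputable def indepNum2 (G : Finset (ℕ × ℕ)) : ℕ :=
  (G.powerset.filter fun I => ∀ p ∈ I, ∀ q ∈ I, ¬ shAdj p q).sup Finset.card

/-- `α_n^2`: the minimum of `α(Sh_n^2[G])/|G|` over nonempty `G ⊆ V(Sh_n^2)`. -/
noncomputable def alpha2 (n : ℕ) : ℝ :=
  sInf {r : ℝ | ∃ G : Finset (ℕ × ℕ), G.Nonempty ∧ G ⊆ shiftVerts n ∧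
    r = (indepNum2 G : ℝ) / G.card}

lemma lower_nat (n : ℕ) : n / 2 * (n - n / 2) ≤ indepNum2 (shiftVerts n) := by
  unfold indepNum2
  rw [Finset.filter_congr_decidable]
  set k := n / 2 with hk
  set I : Finset (ℕ × ℕ) := Finset.Icc 1 k ×ˢ Finset.Icc (k+1) n with hI
  refine le_trans (le_of_eq ?_) (Finset.le_sup (b := I) (Finset.mem_filter.mpr ⟨Finset.mem_powerset.mpr ?_, ?_⟩))
  · simp [hI, Nat.card_Icc]
  · intro p hp
    simp only [hI, Finset.mem_product, Finset.mem_Icc] at hp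
    simp only [shiftVerts, Finset.mem_filter, Finset.mem_product, Finset.mem_Icc]
    omega
  · intro p hp q hq h
    simp only [hI, Finset.mem_product, Finset.mem_Icc] at hp hq
    rcases h with ⟨_, h | h⟩ <;> omega

lemma upper_nat (n : ℕ) : 4 * indepNum2 (shiftVerts n) ≤ n ^ 2 := by
  have h : indepNum2 (shiftVerts n) ≤ n ^ 2 / 4 := by
    unfold indepNum2
    rw [Finset.filter_congr_decidable]
    apply Finset.sup_le
    intro I hI
    obtain ⟨hsub', hind⟩ := Finset.mem_filter.mp hI
    have hsub := Finset.mem_powerset.mp hsub'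
    rw [Nat.le_div_iff_mul_le (by norm_num)]
    set A := I.image Prod.fst with hA
    set B := I.image Prod.snd with hB
    have hiv : ∀ p ∈ I, 1 ≤ p.1 ∧ p.1 ≤ n ∧ 1 ≤ p.2 ∧ p.2 ≤ n ∧ p.1 < p.2 := by
      intro p hp
      have := hsub hp
      simp only [shiftVerts, Finset.mem_filter, Finset.mem_product, Finset.mem_Icc] at this
      tauto
    have hdisj : Disjoint A B := by
      rw [Finset.disjoint_left]
      intro a ha hb
      simp only [hA, Finset.mem_image] at ha
      simp only [hB, Finset.mem_image] at hb
      obtain ⟨p, hp, hpa⟩ := ha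
      obtain ⟨q, hq, hqa⟩ := hb
      by_cases hpq : p = q
      · subst hpq
        have := (hiv p hp).2.2.2.2
        omega
      · exact hind q hq p hp ⟨fun h => hpq h.symm, Or.inl (by omega)⟩
    have hIsub : I ⊆ A ×ˢ B := by
      intro p hp
      simp only [Finset.mem_product, hA, hB, Finset.mem_image]
      exact ⟨⟨p, hp, rfl⟩, ⟨p, hp, rfl⟩⟩
    have h1 : I.card ≤ A.card * B.card := by
      calc I.card ≤ (A ×ˢ B).card := Finset.card_le_card hIsub
        _ = A.card * B.card := Finset.card_product _ _
    have h2 : A.card + B.card ≤ n := by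
      have hun : A ∪ B ⊆ Finset.Icc 1 n := by
        intro a ha
        rw [Finset.mem_union] at ha
        rcases ha with ha | ha <;> simp only [hA, hB, Finset.mem_image] at ha <;>
          obtain ⟨p, hp, hpa⟩ := ha <;> have := hiv p hp <;>
          simp only [Finset.mem_Icc] <;> omega
      calc A.card + B.card = (A ∪ B).card := (Finset.card_union_of_disjoint hdisj).symm
        _ ≤ (Finset.Icc 1 n).card := Finset.card_le_card hun
        _ = n := by simp [Nat.card_Icc]
    nlinarith [h1, Nat.pow_le_pow_left h2 2, two_mul_le_add_sq A.card B.card]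
  omega

lemma lower_sq (n : ℕ) (hn : 2 ≤ n) : (n - 1) ^ 2 ≤ 4 * (n / 2 * (n - n / 2)) := by
  obtain ⟨k, hk | hk⟩ : ∃ k, n = 2 * k ∨ n = 2 * k + 1 := ⟨n / 2, by omega⟩
  · have h1 : n / 2 = k := by omega
    have h2 : n - n / 2 = k := by omega
    have h3 : n - 1 = 2 * k - 1 := by omega
    rw [h3, h2, h1]
    have hk1 : 1 ≤ k := by omega
    zify [show 1 ≤ 2 * k by omega]
    nlinarith
  · have h1 : n / 2 = k := by omega
    have h2 : n - n / 2 = k + 1 := by omega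
    have h3 : n - 1 = 2 * k := by omega
    rw [h3, h2, h1]
    ring_nf
    nlinarith

/-- `α(Sh_n^2)/C(n,2) → 1/2` as `n → ∞`, where `C(n,2) = n(n-1)/2`. -/
theorem indepNum2_ratio_tendsto_half :
    Filter.Tendsto (fun n : ℕ => (indepNum2 (shiftVerts n) : ℝ) / ((n : ℝ) * ((n : ℝ) - 1) / 2))
      Filter.atTop (nhds (1/2 : ℝ)) := by
  have h0 : Filter.Tendsto (fun n : ℕ => (1:ℝ)/n) Filter.atTop (nhds 0) :=
    tendsto_one_div_atTop_nhds_zero_nat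
  have hL : Filter.Tendsto (fun n : ℕ => ((n:ℝ) - 1)/(2*(n:ℝ))) Filter.atTop (nhds (1/2)) := by
    have h1 : Filter.Tendsto (fun n : ℕ => 1/2 - ((1:ℝ)/n)/2) Filter.atTop (nhds (1/2 - 0/2)) :=
      tendsto_const_nhds.sub (h0.div_const 2)
    norm_num at h1
    refine Filter.Tendsto.congr' ?_ h1
    filter_upwards [Filter.eventually_ge_atTop 1] with n hn
    have hn' : (1:ℝ) ≤ (n:ℝ) := by exact_mod_cast hn
    have h2 : (n:ℝ) ≠ 0 := by linarith
    rw [eq_div_iff (by positivity : (2:ℝ)*(n:ℝ) ≠ 0)]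
    field_simp
  have hU : Filter.Tendsto (fun n : ℕ => (n:ℝ)/(2*((n:ℝ)-1))) Filter.atTop (nhds (1/2)) := by
    have hsub : Filter.Tendsto (fun n : ℕ => (n:ℝ) - 1) Filter.atTop Filter.atTop :=
      (Filter.tendsto_atTop_add_const_right Filter.atTop (-1 : ℝ) tendsto_natCast_atTop_atTop).congr
        (fun n => (sub_eq_add_neg _ _).symm)
    have h0' : Filter.Tendsto (fun n : ℕ => ((n:ℝ)-1)⁻¹) Filter.atTop (nhds 0) :=
      hsub.inv_tendsto_atTop
    have h1 : Filter.Tendsto (fun n : ℕ => 1/2 + ((n:ℝ)-1)⁻¹/2) Filter.atTop (nhds (1/2 + 0/2)) :=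
      tendsto_const_nhds.add (h0'.div_const 2)
    norm_num at h1
    refine Filter.Tendsto.congr' ?_ h1
    filter_upwards [Filter.eventually_ge_atTop 2] with n hn
    have hn' : (2:ℝ) ≤ (n:ℝ) := by exact_mod_cast hn
    have h2 : (n:ℝ) - 1 ≠ 0 := by linarith
    rw [eq_div_iff (by intro h; rcases mul_eq_zero.mp h with h' | h' <;> [norm_num at h'; exact h2 h'])]
    field_simp
    ring
  refine tendsto_of_tendsto_of_tendsto_of_le_of_le' hL hU ?_ ?_
  · filter_upwards [Filter.eventually_ge_atTop 2] with n hn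
    have hn' : (2:ℝ) ≤ (n:ℝ) := by exact_mod_cast hn
    have hcast : (((n - 1 : ℕ)) : ℝ) = (n:ℝ) - 1 := by
      have : 1 ≤ n := by omega
      push_cast [this]; ring
    have hlow : ((n:ℝ) - 1)^2 ≤ 4 * (indepNum2 (shiftVerts n) : ℝ) := by
      have h := (lower_sq n hn).trans (Nat.mul_le_mul_left 4 (lower_nat n))
      have := (Nat.cast_le (α := ℝ)).mpr h
      push_cast at this
      rw [show (((n - 1 : ℕ)) : ℝ) ^ 2 = ((n:ℝ) - 1)^2 by rw [hcast]] at this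
      linarith
    rw [div_le_div_iff₀ (by positivity) (by nlinarith)]
    nlinarith
  · filter_upwards [Filter.eventually_ge_atTop 2] with n hn
    have hn' : (2:ℝ) ≤ (n:ℝ) := by exact_mod_cast hn
    have hup : 4 * (indepNum2 (shiftVerts n) : ℝ) ≤ (n:ℝ)^2 := by
      have := (Nat.cast_le (α := ℝ)).mpr (upper_nat n)
      push_cast at this
      linarith
    rw [div_le_div_iff₀ (by nlinarith) (by nlinarith)]
    nlinarith
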